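/- For all x, y ∈ X and n ≥ 1, dist_n(x,y) ≤ d_n(orb x, orb y), where d_n(u,v) = max_{0≤k≤n-1} d(σ^k(u), σ^k(v)); consequently every (n,ε)-separated subset of X maps under the orbit map to an (n,ε)-separated subset of orb X, so N(n,ε,X) ≤ N(n,ε,orb X), and hence h(f) ≤ h_F(f). -/

import Mathlib

open scoped ENNReal

/-- The metric `d({x_i},{y_i}) = Σ_{i=1}^∞ dist(x_i,y_i)/2^{i-1}` on the sequence space
`Y^ℕ` (indexed here from `0`, with weight `1/2^i` on the `i`-th coordinate). -/
noncomputable def seqDist {Y : Type*} [MetricSpace Y] (x y : ℕ → Y) : ℝ :=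
  ∑' i : ℕ, dist (x i) (y i) / 2 ^ i

/-- The left shift `σ` on `Y^ℕ`. -/
def shift {Y : Type*} (y : ℕ → Y) : ℕ → Y := fun i => y (i + 1)

/-- The orbit map of `f : X → X`, `X ⊆ Y`: `ω(x) = (x, f(x), f²(x), ...) ∈ Y^ℕ`. -/
noncomputable def orbMap {Y : Type*} [MetricSpace Y] {X : Set Y} (f : X → X) (x : X) :
    ℕ → Y := fun i => (f^[i] x : Y)

/-- The Bowen dynamical distance `dist_n(x,y) = max_{0 ≤ k ≤ n-1} dist (f^k x) (f^k y)`. -/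
noncomputable def dynDist {X : Type*} [MetricSpace X] (f : X → X) (n : ℕ) (x y : X) : ℝ :=
  ⨆ k : Fin n, dist (f^[(k : ℕ)] x) (f^[(k : ℕ)] y)

/-- The dynamical distance `d_n(u,v) = max_{0 ≤ k ≤ n-1} d(σ^k u, σ^k v)` for the shift `σ`
on `(Y^ℕ, d)`. -/
noncomputable def seqDynDist {Y : Type*} [MetricSpace Y] (n : ℕ) (u v : ℕ → Y) : ℝ :=
  ⨆ k : Fin n, seqDist (shift^[(k : ℕ)] u) (shift^[(k : ℕ)] v)

/-- `N(n,ε,X)` for `f`: the maximal cardinality of an `(n,ε)`-separated subset of `X`. -/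
noncomputable def sepNum {X : Type*} [MetricSpace X] (f : X → X) (n : ℕ) (ε : ℝ)
    (K : Set X) : ℕ∞ :=
  ⨆ S ∈ {S : Set X | S ⊆ K ∧ ∀ x ∈ S, ∀ y ∈ S, x ≠ y → ε ≤ dynDist f n x y}, S.encard

/-- `N(n,ε,K)` for the shift on `(Y^ℕ, d)`: the maximal cardinality of a subset of `K`
which is `(n,ε)`-separated for the metrics `d_n`. -/
noncomputable def seqSepNum {Y : Type*} [MetricSpace Y] (n : ℕ) (ε : ℝ)
    (K : Set (ℕ → Y)) : ℕ∞ :=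
  ⨆ S ∈ {S : Set (ℕ → Y) | S ⊆ K ∧ ∀ u ∈ S, ∀ v ∈ S, u ≠ v → ε ≤ seqDynDist n u v}, S.encard

/-- The topological entropy `h(f) = h(f,X)` of `f : X → X` via `(n,ε)`-separated sets. -/
noncomputable def dynEntropy {X : Type*} [MetricSpace X] (f : X → X) : EReal :=
  ⨆ ε : {ε : ℝ // 0 < ε},
    Filter.atTop.limsup fun n : ℕ =>
      ENNReal.log (sepNum f n ε.1 Set.univ : ℝ≥0∞) / (n : EReal)

/-- The entropy `h_F(f) = h(σ, 𝒳)` of the shift on the closure `𝒳` of the orbit space,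
via `(n,ε)`-separated sets for the metric `d`. -/
noncomputable def orbitEntropy {Y : Type*} [MetricSpace Y] {X : Set Y} (f : X → X) : EReal :=
  ⨆ ε : {ε : ℝ // 0 < ε},
    Filter.atTop.limsup fun n : ℕ =>
      ENNReal.log (seqSepNum n ε.1 (closure (Set.range (orbMap f))) : ℝ≥0∞) / (n : EReal)


lemma shift_iterate {Y : Type*} (u : ℕ → Y) (k i : ℕ) : shift^[k] u i = u (i + k) := by
  induction k generalizing u with
  | zero => rfl
  | succ k ih =>
    rw [Function.iterate_succ_apply, ih]
    simp [shift, Nat.add_assoc, Nat.add_comm 1 k]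

lemma summable_aux {Y : Type*} [MetricSpace Y] [CompactSpace Y] (u v : ℕ → Y) :
    Summable (fun i => dist (u i) (v i) / 2 ^ i) := by
  have hb : Bornology.IsBounded (Set.univ : Set Y) := Metric.isBounded_of_compactSpace
  have hs : Summable fun i : ℕ => Metric.diam (Set.univ : Set Y) * (1 / 2 : ℝ) ^ i :=
    summable_geometric_two.mul_left _
  refine Summable.of_nonneg_of_le (fun i => by positivity) (fun i => ?_) hs
  rw [one_div, inv_pow, ← div_eq_mul_inv]
  gcongr
  exact Metric.dist_le_diam_of_mem hb (Set.mem_univ _) (Set.mem_univ _)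

lemma seqDist_ge {Y : Type*} [MetricSpace Y] [CompactSpace Y] (u v : ℕ → Y) :
    dist (u 0) (v 0) ≤ seqDist u v := by
  have h := summable_aux u v
  have := Summable.le_tsum h 0 (fun i _ => by positivity)
  simpa [seqDist] using this

lemma key_lemma {Y : Type*} [MetricSpace Y] [CompactSpace Y] {X : Set Y} (f : X → X)
    (x y : X) (n : ℕ) :
    dynDist f n x y ≤ seqDynDist n (orbMap f x) (orbMap f y) := by
  unfold dynDist seqDynDist
  rcases Nat.eq_zero_or_pos n with rfl | hn
  · simp [Real.iSup_of_isEmpty]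
  · refine ciSup_mono (Set.Finite.bddAbove (Set.finite_range _)) (fun k => ?_)
    have h := seqDist_ge (shift^[(k : ℕ)] (orbMap f x)) (shift^[(k : ℕ)] (orbMap f y))
    rw [shift_iterate, shift_iterate] at h
    simpa [orbMap, Subtype.dist_eq] using h

lemma orbMap_injective {Y : Type*} [MetricSpace Y] {X : Set Y} (f : X → X) :
    Function.Injective (orbMap f) := by
  intro a b h
  have := congrFun h 0
  simpa [orbMap, Subtype.coe_injective.eq_iff] using this

lemma sep_image {Y : Type*} [MetricSpace Y] [CompactSpace Y] {X : Set Y} (f : X → X)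
    (n : ℕ) (ε : ℝ) (S : Set X)
    (hS : ∀ x ∈ S, ∀ y ∈ S, x ≠ y → ε ≤ dynDist f n x y) :
    ∀ u ∈ orbMap f '' S, ∀ v ∈ orbMap f '' S, u ≠ v → ε ≤ seqDynDist n u v := by
  rintro u ⟨x, hx, rfl⟩ v ⟨y, hy, rfl⟩ huv
  have hxy : x ≠ y := fun h => huv (by rw [h])
  exact (hS x hx y hy hxy).trans (key_lemma f x y n)

lemma sepNum_le {Y : Type*} [MetricSpace Y] [CompactSpace Y] {X : Set Y} (f : X → X)
    (n : ℕ) (ε : ℝ) :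
    sepNum f n ε Set.univ ≤ seqSepNum n ε (Set.range (orbMap f)) := by
  refine iSup₂_le fun S hS => ?_
  have h1 : S.encard = (orbMap f '' S).encard :=
    (Set.InjOn.encard_image ((orbMap_injective f).injOn)).symm
  rw [h1]
  exact le_iSup₂_of_le (orbMap f '' S)
    ⟨Set.image_subset_range _ _, sep_image f n ε S hS.2⟩ le_rfl

lemma seqSepNum_mono {Y : Type*} [MetricSpace Y] (n : ℕ) (ε : ℝ) {K K' : Set (ℕ → Y)}
    (h : K ⊆ K') : seqSepNum n ε K ≤ seqSepNum n ε K' :=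
  iSup₂_le fun S hS => le_iSup₂_of_le S ⟨hS.1.trans h, hS.2⟩ le_rfl

lemma entropy_le {Y : Type*} [MetricSpace Y] [CompactSpace Y] {X : Set Y} (f : X → X) :
    dynEntropy f ≤ orbitEntropy f := by
  refine iSup_mono fun ε => Filter.limsup_le_limsup (Filter.Eventually.of_forall fun n => ?_)
  refine EReal.div_le_div_right_of_nonneg (by exact_mod_cast Nat.zero_le n) ?_
  refine ENNReal.log_monotone ?_
  exact_mod_cast (sepNum_le f n ε.1).trans (seqSepNum_mono n ε.1 subset_closure)

/-- For all `x, y ∈ X` and `n ≥ 1`, `dist_n(x,y) ≤ d_n(orb x, orb y)`; consequently the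
orbit map sends `(n,ε)`-separated subsets of `X` to `(n,ε)`-separated subsets of `orb X`,
so `N(n,ε,X) ≤ N(n,ε,orb X)`, and hence `h(f) ≤ h_F(f)`. -/
theorem entropy_le_orbit_entropy {Y : Type*} [MetricSpace Y] [CompactSpace Y]
    {X : Set Y} (f : X → X) (hf : Continuous f) :
    (∀ (x y : X) (n : ℕ), 1 ≤ n →
      dynDist f n x y ≤ seqDynDist n (orbMap f x) (orbMap f y)) ∧
    (∀ (n : ℕ) (ε : ℝ) (S : Set X),
      (∀ x ∈ S, ∀ y ∈ S, x ≠ y → ε ≤ dynDist f n x y) →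
      ∀ u ∈ orbMap f '' S, ∀ v ∈ orbMap f '' S, u ≠ v → ε ≤ seqDynDist n u v) ∧
    (∀ (n : ℕ) (ε : ℝ),
      sepNum f n ε Set.univ ≤ seqSepNum n ε (Set.range (orbMap f))) ∧
    dynEntropy f ≤ orbitEntropy f := by
  exact ⟨fun x y n _ => key_lemma f x y n, sep_image f, sepNum_le f, entropy_le f⟩
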